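/- Let κ₀ > 0, let c ∈ (−1, −1/2), and let f : (0,∞) → ℝ be continuous with ∫₀^∞ t^{c+1} |f(t)| dt < ∞ and with Mellin transform f̃(s) = ∫₀^∞ r^{s−1} f(r) dr absolutely integrable over the line {Re λ = c} as a function of λ ↦ f̃(λ+2). Define q₁(r) = (1/(2πi)) ∫_{Re λ = c} r^{−λ} f̃(λ+2)/(κ₀ λ (λ+1)) dλ for r > 0. Then q₁ is differentiable on (0,∞) with q₁′(r) = −(1/κ₀) ∫_r^∞ f(t) dt for every r > 0; in particular, if ∫₀^∞ f(t) dt = 0 (and this integral converges), then lim_{r→0⁺} q₁′(r) = 0. -/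

import Mathlib

open Complex Filter Real MeasureTheory Set

private lemma measurable_ofReal_cpow (s : ℂ) : Measurable fun t : ℝ => (t : ℂ) ^ s := by
  have h : (fun t : ℝ => (t:ℂ) ^ s)
      = fun t : ℝ => if (t:ℂ) = 0 then (if s = 0 then 1 else 0)
          else Complex.exp (Complex.log t * s) := by
    funext t; rw [Complex.cpow_def]
  rw [h]
  exact Measurable.ite (measurableSet_eq_fun Complex.measurable_ofReal measurable_const)
    measurable_const ((Complex.measurable_ofReal.clog.mul measurable_const).cexp)

private lemma hasDerivAt_cpow_neg {x : ℝ} (hx : 0 < x) {w : ℂ} (hw : w ≠ 0) :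
    HasDerivAt (fun y : ℝ => (y:ℂ) ^ (-w)) (-w * (x:ℂ)^(-w-1)) x := by
  have hne : -w - 1 ≠ -1 := fun h => hw (by linear_combination -h)
  have h := (hasDerivAt_ofReal_cpow_const' (ne_of_gt hx) hne).const_mul (-w)
  have e : (fun y : ℝ => (-w) * ((y:ℂ) ^ (-w-1+1) / (-w-1+1))) = fun y : ℝ => (y:ℂ)^(-w) := by
    funext y
    have h1 : -w - 1 + 1 = -w := by ring
    rw [h1]
    field_simp
  rwa [e] at h

private lemma intOn_Ioi (c : ℝ) (hc : -1 < c) (f : ℝ → ℝ)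
    (hf : ContinuousOn f (Set.Ioi 0))
    (hint : IntegrableOn (fun t : ℝ => t ^ (c + 1) * |f t|) (Set.Ioi 0))
    {t : ℝ} (ht : 0 < t) : IntegrableOn f (Set.Ioi t) := by
  have hc1 : (0:ℝ) < c + 1 := by linarith
  have hmeas : AEStronglyMeasurable f (volume.restrict (Set.Ioi t)) :=
    (hf.mono (Set.Ioi_subset_Ioi ht.le)).aestronglyMeasurable measurableSet_Ioi
  refine Integrable.mono'
    ((hint.mono_set (Set.Ioi_subset_Ioi ht.le)).const_mul (t ^ (-(c+1)))) hmeas ?_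
  filter_upwards [ae_restrict_mem measurableSet_Ioi] with u hu
  have hu0 : 0 < u := ht.trans hu
  have h1 : t ^ (c+1) * |f u| ≤ u ^ (c+1) * |f u| :=
    mul_le_mul_of_nonneg_right (Real.rpow_le_rpow ht.le (le_of_lt hu) hc1.le) (abs_nonneg _)
  have h2 : t ^ (-(c+1)) * (t ^ (c+1) * |f u|) = |f u| := by
    rw [← mul_assoc, ← Real.rpow_add ht, neg_add_cancel, Real.rpow_zero, one_mul]
  calc ‖f u‖ = |f u| := rfl
    _ = t ^ (-(c+1)) * (t ^ (c+1) * |f u|) := h2.symm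
    _ ≤ t ^ (-(c+1)) * (u ^ (c+1) * |f u|) :=
        mul_le_mul_of_nonneg_left h1 (Real.rpow_nonneg ht.le _)

private lemma fubini_mellin (c : ℝ) (hc : -1 < c) (f : ℝ → ℝ)
    (hf : ContinuousOn f (Set.Ioi 0))
    (hint : IntegrableOn (fun t : ℝ => t ^ (c + 1) * |f t|) (Set.Ioi 0))
    {s : ℂ} (hs : s.re = c + 1) :
    IntegrableOn (fun t : ℝ => (t:ℂ)^(s-1) * ∫ u in Set.Ioi t, (f u : ℂ)) (Set.Ioi 0) ∧
    (∫ t : ℝ in Set.Ioi (0:ℝ), (t:ℂ)^(s-1) * ∫ u in Set.Ioi t, (f u : ℂ)) =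
      (mellin (fun t => (f t : ℂ)) (s+1)) / s := by
  have hc1 : (0:ℝ) < c + 1 := by linarith
  have hs0 : s ≠ 0 := fun h => by rw [h] at hs; simp at hs; linarith
  have hsre : -1 < (s - 1).re := by rw [Complex.sub_re, Complex.one_re, hs]; linarith
  set ν := volume.restrict (Set.Ioi (0:ℝ)) with hν
  set H : ℝ × ℝ → ℂ := fun p =>
    {q : ℝ × ℝ | q.1 < q.2}.indicator (fun q => (q.1:ℂ)^(s-1) * (f q.2 : ℂ)) p with hH
  have hmeasset : MeasurableSet {q : ℝ × ℝ | q.1 < q.2} :=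
    measurableSet_lt measurable_fst measurable_snd
  have hfm : AEStronglyMeasurable (fun u => (f u : ℂ)) ν :=
    (Complex.continuous_ofReal.comp_continuousOn hf).aestronglyMeasurable measurableSet_Ioi
  have hHmeas : AEStronglyMeasurable H (ν.prod ν) := by
    refine AEStronglyMeasurable.indicator ?_ hmeasset
    exact (((measurable_ofReal_cpow (s-1)).comp measurable_fst).aestronglyMeasurable).mul
      (hfm.comp_quasiMeasurePreserving Measure.quasiMeasurePreserving_snd)
  have hHfun : ∀ u : ℝ, (fun t => H (t, u)) =
      (Set.Iio u).indicator (fun t : ℝ => (t:ℂ)^(s-1) * (f u : ℂ)) := by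
    intro u; funext t
    by_cases h : t < u
    · simp [hH, Set.indicator_apply, h]
    · simp [hH, Set.indicator_apply, h]
  have hHint : Integrable H (ν.prod ν) := by
    rw [integrable_prod_iff' hHmeas]
    constructor
    · filter_upwards [ae_restrict_mem measurableSet_Ioi] with u hu
      rw [hHfun u, integrable_indicator_iff measurableSet_Iio]
      rw [IntegrableOn, hν, Measure.restrict_restrict measurableSet_Iio]
      have hset : Set.Iio u ∩ Set.Ioi 0 = Set.Ioo 0 u := by
        ext x; simp [Set.mem_Ioo, and_comm]
      rw [hset]
      have h1 : IntegrableOn (fun t : ℝ => (t:ℂ)^(s-1)) (Set.Ioo 0 u) :=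
        (intervalIntegrable_iff_integrableOn_Ioo_of_le (le_of_lt hu)).mp
          (intervalIntegral.intervalIntegrable_cpow' hsre)
      exact h1.mul_const _
    · have heq : ∀ᵐ u ∂ν, (∫ t, ‖H (t, u)‖ ∂ν) = |f u| * (u ^ (c+1) / (c+1)) := by
        filter_upwards [ae_restrict_mem measurableSet_Ioi] with u hu
        have h1 : (fun t => ‖H (t, u)‖) =
            (Set.Iio u).indicator (fun t : ℝ => ‖(t:ℂ)^(s-1) * (f u : ℂ)‖) := by
          funext t
          rw [show H (t, u) = (Set.Iio u).indicator (fun t : ℝ => (t:ℂ)^(s-1) * (f u : ℂ)) t from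
            congrFun (hHfun u) t]
          exact norm_indicator_eq_indicator_norm _ _
        rw [h1, integral_indicator measurableSet_Iio, hν,
          Measure.restrict_restrict measurableSet_Iio]
        have hset : Set.Iio u ∩ Set.Ioi 0 = Set.Ioo 0 u := by
          ext x; simp [Set.mem_Ioo, and_comm]
        rw [hset]
        have h2 : ∀ t ∈ Set.Ioo (0:ℝ) u, ‖(t:ℂ)^(s-1) * (f u : ℂ)‖ = t ^ c * |f u| := by
          intro t ht
          rw [norm_mul, Complex.norm_cpow_eq_rpow_re_of_pos ht.1, Complex.norm_real, Real.norm_eq_abs]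
          congr 2
          rw [Complex.sub_re, Complex.one_re, hs]; ring
        rw [setIntegral_congr_fun measurableSet_Ioo h2, MeasureTheory.integral_mul_const,
          ← integral_Ioc_eq_integral_Ioo, ← intervalIntegral.integral_of_le (le_of_lt hu),
          integral_rpow (Or.inl hc), Real.zero_rpow (ne_of_gt hc1)]
        ring
      have hI : Integrable (fun u : ℝ => |f u| * (u ^ (c+1) / (c+1))) ν := by
        have h2 : (fun u : ℝ => |f u| * (u ^ (c+1) / (c+1)))
            = fun u : ℝ => (u ^ (c+1) * |f u|) / (c+1) := by funext u; ring
        rw [h2]; exact hint.div_const _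
      exact hI.congr (Filter.EventuallyEq.symm heq)
  have hinner_t : ∀ t : ℝ, 0 < t →
      (∫ u, H (t, u) ∂ν) = (t:ℂ)^(s-1) * ∫ u in Set.Ioi t, (f u : ℂ) := by
    intro t ht
    have h1 : (fun u => H (t, u)) = (Set.Ioi t).indicator (fun u : ℝ => (t:ℂ)^(s-1) * (f u : ℂ)) := by
      funext u
      by_cases h : t < u
      · simp [hH, Set.indicator_apply, h]
      · simp [hH, Set.indicator_apply, h]
    rw [h1, integral_indicator measurableSet_Ioi, hν, Measure.restrict_restrict measurableSet_Ioi,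
      Set.inter_eq_left.mpr (Set.Ioi_subset_Ioi (le_of_lt ht)), MeasureTheory.integral_const_mul]
  have hmarg : Integrable (fun t => ∫ u, H (t, u) ∂ν) ν := hHint.integral_prod_left
  have h1 : IntegrableOn (fun t : ℝ => (t:ℂ)^(s-1) * ∫ u in Set.Ioi t, (f u : ℂ)) (Set.Ioi 0) := by
    refine hmarg.congr ?_
    filter_upwards [ae_restrict_mem measurableSet_Ioi] with t ht using hinner_t t ht
  refine ⟨h1, ?_⟩
  have hswap := integral_integral_swap (f := fun t u => H (t, u)) (μ := ν) (ν := ν) hHint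
  have hL : (∫ t, (∫ u, H (t, u) ∂ν) ∂ν)
      = ∫ t : ℝ in Set.Ioi (0:ℝ), (t:ℂ)^(s-1) * ∫ u in Set.Ioi t, (f u : ℂ) :=
    setIntegral_congr_fun measurableSet_Ioi (fun t ht => hinner_t t ht)
  have hcpow_int : ∀ u : ℝ, 0 < u →
      (∫ t in Set.Ioo (0:ℝ) u, (t:ℂ)^(s-1)) = (u:ℂ)^s / s := by
    intro u hu
    rw [← integral_Ioc_eq_integral_Ioo, ← intervalIntegral.integral_of_le (le_of_lt hu),
      integral_cpow (Or.inl hsre)]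
    have h2 : s - 1 + 1 = s := by ring
    rw [h2, Complex.ofReal_zero, Complex.zero_cpow hs0, sub_zero]
  have hinner_u : ∀ u : ℝ, 0 < u →
      (∫ t, H (t, u) ∂ν) = (u:ℂ)^s * (f u : ℂ) / s := by
    intro u hu
    rw [hHfun u, integral_indicator measurableSet_Iio, hν,
      Measure.restrict_restrict measurableSet_Iio]
    have hset : Set.Iio u ∩ Set.Ioi 0 = Set.Ioo 0 u := by
      ext x; simp [Set.mem_Ioo, and_comm]
    rw [hset, MeasureTheory.integral_mul_const, hcpow_int u hu]
    ring
  have hR : (∫ u, (∫ t, H (t, u) ∂ν) ∂ν) = (mellin (fun t => (f t : ℂ)) (s+1)) / s := by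
    have h2 : (∫ u, (∫ t, H (t, u) ∂ν) ∂ν) = ∫ u : ℝ in Set.Ioi (0:ℝ), (u:ℂ)^s * (f u : ℂ) / s :=
      setIntegral_congr_fun measurableSet_Ioi (fun u hu => hinner_u u hu)
    rw [h2, integral_div, mellin]
    congr 1
    refine setIntegral_congr_fun measurableSet_Ioi (fun u hu => ?_)
    have h3 : s + 1 - 1 = s := by ring
    rw [smul_eq_mul, h3]
  rw [← hL, hswap, hR]

/-- `q₁(r) = (1/(2πi)) ∫_{Re λ = c} r^{-λ} f̃(λ+2)/(κ₀ λ (λ+1)) dλ`, the contour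
integral over the vertical line `{Re λ = c}` (`λ = c + iτ`, `dλ = i dτ`), where
`f̃ = mellin f` is the Mellin transform `f̃(s) = ∫₀^∞ r^{s-1} f(r) dr`. -/
noncomputable def qOne (κ₀ c : ℝ) (f : ℝ → ℝ) (r : ℝ) : ℂ :=
  (1 / (2 * (π : ℂ) * Complex.I)) *
    ∫ τ : ℝ, (r : ℂ) ^ (-((c : ℂ) + (τ : ℂ) * Complex.I)) *
      mellin (fun t => (f t : ℂ)) ((c : ℂ) + (τ : ℂ) * Complex.I + 2) /
        ((κ₀ : ℂ) * ((c : ℂ) + (τ : ℂ) * Complex.I) *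
          ((c : ℂ) + (τ : ℂ) * Complex.I + 1)) * Complex.I

private lemma qOne_hasDerivAt (κ₀ c : ℝ) (hκ₀ : 0 < κ₀) (hc : c ∈ Set.Ioo (-1 : ℝ) (-1/2))
    (f : ℝ → ℝ) (hf : ContinuousOn f (Set.Ioi 0))
    (hint : IntegrableOn (fun t : ℝ => t ^ (c + 1) * |f t|) (Set.Ioi 0))
    (hmel : Integrable (fun τ : ℝ =>
      mellin (fun t => (f t : ℂ)) ((c : ℂ) + (τ : ℂ) * Complex.I + 2)))
    {r : ℝ} (hr : 0 < r) :
    HasDerivAt (qOne κ₀ c f) (-(1/(κ₀:ℂ)) * ∫ u in Set.Ioi r, (f u : ℂ)) r := by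
  obtain ⟨hcm1, hcm2⟩ := hc
  have hcneg : c < 0 := by linarith
  have hc1p : (0:ℝ) < c + 1 := by linarith
  have hκne : (κ₀:ℂ) ≠ 0 := by exact_mod_cast ne_of_gt hκ₀
  have hπ : (π:ℂ) ≠ 0 := by exact_mod_cast Real.pi_ne_zero
  have hre : ∀ τ : ℝ, ((c:ℂ) + (τ:ℂ) * Complex.I).re = c := by
    intro τ; simp
  have hlam_ne : ∀ τ : ℝ, (c:ℂ) + (τ:ℂ) * Complex.I ≠ 0 := by
    intro τ h
    have := congrArg Complex.re h
    rw [hre] at this; simp at this; linarith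
  have hlam1_ne : ∀ τ : ℝ, (c:ℂ) + (τ:ℂ) * Complex.I + 1 ≠ 0 := by
    intro τ h
    have := congrArg Complex.re h
    simp at this; linarith
  set M : ℝ → ℂ := fun τ => mellin (fun t : ℝ => (f t : ℂ)) ((c:ℂ) + (τ:ℂ) * Complex.I + 2)
    with hM
  set D : ℝ → ℂ := fun τ =>
    (κ₀:ℂ) * ((c:ℂ) + (τ:ℂ) * Complex.I) * ((c:ℂ) + (τ:ℂ) * Complex.I + 1) with hD
  set F' : ℝ → ℝ → ℂ := fun x τ =>
    -Complex.I * (x:ℂ) ^ (-((c:ℂ) + (τ:ℂ) * Complex.I) - 1) *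
      (M τ / ((κ₀:ℂ) * ((c:ℂ) + (τ:ℂ) * Complex.I + 1))) with hF'
  -- norm facts
  have habs : ∀ τ : ℝ, (-c) * (c+1) * κ₀ ≤ ‖D τ‖ := by
    intro τ
    have h1 : -c ≤ ‖(c:ℂ) + (τ:ℂ) * Complex.I‖ := by
      have := Complex.abs_re_le_norm ((c:ℂ) + (τ:ℂ) * Complex.I)
      rw [hre, abs_of_neg hcneg] at this; exact this
    have h2 : c + 1 ≤ ‖(c:ℂ) + (τ:ℂ) * Complex.I + 1‖ := by
      have := Complex.abs_re_le_norm ((c:ℂ) + (τ:ℂ) * Complex.I + 1)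
      have hre2 : ((c:ℂ) + (τ:ℂ) * Complex.I + 1).re = c + 1 := by simp
      rw [hre2, abs_of_pos hc1p] at this; exact this
    rw [hD]
    simp only [norm_mul, map_mul, Complex.norm_real, Real.norm_eq_abs,
      abs_of_pos hκ₀]
    calc (-c) * (c+1) * κ₀ ≤ ‖(c:ℂ) + (τ:ℂ)*Complex.I‖
        * ‖(c:ℂ) + (τ:ℂ)*Complex.I + 1‖ * κ₀ := by
          apply mul_le_mul_of_nonneg_right _ hκ₀.le
          exact mul_le_mul h1 h2 hc1p.le (norm_nonneg _)
      _ = κ₀ * ‖(c:ℂ) + (τ:ℂ)*Complex.I‖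
          * ‖(c:ℂ) + (τ:ℂ)*Complex.I + 1‖ := by ring
  have hmeasF : ∀ x : ℝ, 0 < x → AEStronglyMeasurable
      (fun τ : ℝ => (x:ℂ) ^ (-((c:ℂ) + (τ:ℂ) * Complex.I)) * M τ / D τ * Complex.I)
      volume := by
    intro x hx
    have hxne : (x:ℂ) ≠ 0 := by exact_mod_cast ne_of_gt hx
    have hcont1 : Continuous fun τ : ℝ => (x:ℂ) ^ (-((c:ℂ) + (τ:ℂ) * Complex.I)) := by
      apply Continuous.const_cpow _ (Or.inl hxne)
      fun_prop
    have hcontD : Continuous D := by rw [hD]; fun_prop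
    exact ((((hcont1.aemeasurable.mul hmel.aestronglyMeasurable.aemeasurable).div
      hcontD.aemeasurable).mul_const Complex.I).aestronglyMeasurable)
  have key : HasDerivAt
      (fun x : ℝ => ∫ τ : ℝ, (x:ℂ) ^ (-((c:ℂ) + (τ:ℂ) * Complex.I)) * M τ / D τ * Complex.I)
      (∫ τ : ℝ, F' r τ) r := by
    refine (hasDerivAt_integral_of_dominated_loc_of_deriv_le (s := Metric.ball r (r/2))
      (bound := fun τ => (r/2) ^ (-(c+1)) / (κ₀ * (c+1)) * ‖M τ‖) (Metric.ball_mem_nhds r (half_pos hr))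
      ?_ ?_ ?_ ?_ ?_ ?_).2
    · filter_upwards [eventually_gt_nhds hr] with x hx using hmeasF x hx
    · -- integrability of F r
      refine Integrable.mono' (hmel.norm.const_mul (r ^ (-c) / ((-c) * (c+1) * κ₀)))
        (hmeasF r hr) ?_
      refine ae_of_all _ fun τ => ?_
      have hDpos : (0:ℝ) < (-c) * (c+1) * κ₀ := by
        apply mul_pos (mul_pos (by linarith) hc1p) hκ₀
      have hnorm : ‖(r:ℂ) ^ (-((c:ℂ) + (τ:ℂ) * Complex.I)) * M τ / D τ * Complex.I‖
          = r ^ (-c) * ‖M τ‖ / ‖D τ‖ := by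
        rw [norm_mul, norm_div, norm_mul, Complex.norm_I, mul_one]
        congr 2
        rw [Complex.norm_cpow_eq_rpow_re_of_pos hr]
        congr 1
        simp
      rw [hnorm]
      calc r ^ (-c) * ‖M τ‖ / ‖D τ‖ ≤ r ^ (-c) * ‖M τ‖ / ((-c) * (c+1) * κ₀) :=
            div_le_div_of_nonneg_left (by positivity) hDpos (habs τ)
        _ = r ^ (-c) / ((-c) * (c+1) * κ₀) * ‖M τ‖ := by ring
    · -- AESM of F' r
      have hcont1 : Continuous fun τ : ℝ =>
          -Complex.I * (r:ℂ) ^ (-((c:ℂ) + (τ:ℂ) * Complex.I) - 1) := by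
        apply Continuous.mul continuous_const
        apply Continuous.const_cpow _ (Or.inl (by exact_mod_cast ne_of_gt hr))
        fun_prop
      have hcont2 : Continuous fun τ : ℝ => (κ₀:ℂ) * ((c:ℂ) + (τ:ℂ) * Complex.I + 1) := by
        fun_prop
      exact (hcont1.aemeasurable.mul
        (hmel.aestronglyMeasurable.aemeasurable.div hcont2.aemeasurable)).aestronglyMeasurable
    · -- bound
      refine ae_of_all _ fun τ => fun x hx => ?_
      have hx2 : r/2 < x := by
        rw [Real.ball_eq_Ioo] at hx
        have := hx.1; linarith
      have hx0 : 0 < x := lt_trans (half_pos hr) hx2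
      have h2 : c + 1 ≤ ‖(c:ℂ) + (τ:ℂ) * Complex.I + 1‖ := by
        have := Complex.abs_re_le_norm ((c:ℂ) + (τ:ℂ) * Complex.I + 1)
        have hre2 : ((c:ℂ) + (τ:ℂ) * Complex.I + 1).re = c + 1 := by simp
        rw [hre2, abs_of_pos hc1p] at this; exact this
      have hnorm : ‖F' x τ‖ = x ^ (-(c+1)) * ‖M τ‖ /
          (κ₀ * ‖(c:ℂ) + (τ:ℂ) * Complex.I + 1‖) := by
        rw [hF']
        simp only [norm_mul, norm_div, norm_neg, Complex.norm_I,
          one_mul, Complex.norm_real, Real.norm_eq_abs, abs_of_pos hκ₀]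
        rw [Complex.norm_cpow_eq_rpow_re_of_pos hx0]
        have : (-((c:ℂ) + (τ:ℂ) * Complex.I) - 1).re = -(c+1) := by simp; ring
        rw [this]
        ring
      rw [hnorm]
      have hb1 : x ^ (-(c+1)) ≤ (r/2) ^ (-(c+1)) :=
        Real.rpow_le_rpow_of_nonpos (half_pos hr) hx2.le (by linarith)
      have hden : κ₀ * (c+1) ≤ κ₀ * ‖(c:ℂ) + (τ:ℂ) * Complex.I + 1‖ :=
        mul_le_mul_of_nonneg_left h2 hκ₀.le
      calc x ^ (-(c+1)) * ‖M τ‖ / (κ₀ * ‖(c:ℂ) + (τ:ℂ) * Complex.I + 1‖)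
          ≤ x ^ (-(c+1)) * ‖M τ‖ / (κ₀ * (c+1)) :=
            div_le_div_of_nonneg_left (by positivity) (by positivity) hden
        _ ≤ (r/2) ^ (-(c+1)) * ‖M τ‖ / (κ₀ * (c+1)) := by
            apply div_le_div_of_nonneg_right ?_ (by positivity)
            exact mul_le_mul_of_nonneg_right hb1 (norm_nonneg _)
        _ = (r/2) ^ (-(c+1)) / (κ₀ * (c+1)) * ‖M τ‖ := by ring
    · exact hmel.norm.const_mul _
    · -- differentiability
      refine ae_of_all _ fun τ => fun x hx => ?_
      have hx2 : r/2 < x := by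
        rw [Real.ball_eq_Ioo] at hx
        have := hx.1; linarith
      have hx0 : 0 < x := lt_trans (half_pos hr) hx2
      have h := (hasDerivAt_cpow_neg hx0 (hlam_ne τ)).mul_const (M τ / D τ * Complex.I)
      have hfun : (fun y : ℝ => (y:ℂ) ^ (-((c:ℂ) + (τ:ℂ) * Complex.I)) * (M τ / D τ * Complex.I))
          = fun y : ℝ => (y:ℂ) ^ (-((c:ℂ) + (τ:ℂ) * Complex.I)) * M τ / D τ * Complex.I := by
        funext y; ring
      rw [hfun] at h
      refine h.congr_deriv ?_
      rw [hF', hD]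
      field_simp [hlam_ne τ, hlam1_ne τ, hκne]
  -- rewrite the integral ∫ F' r τ via mellin inversion
  set G : ℝ → ℂ := fun t => ∫ u in Set.Ioi t, (f u : ℂ) with hG
  have hmelG : ∀ s : ℂ, s.re = c + 1 → mellin G s = mellin (fun t => (f t : ℂ)) (s+1) / s := by
    intro s hs
    have h := (fubini_mellin c hcm1 f hf hint hs).2
    rw [mellin]
    simp only [hG, smul_eq_mul]
    exact h
  have hconvG : MellinConvergent G ((c+1 : ℝ) : ℂ) := by
    have h := (fubini_mellin c hcm1 f hf hint (s := ((c+1:ℝ):ℂ)) (by simp)).1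
    rw [MellinConvergent]
    simp only [hG, smul_eq_mul]
    exact h
  have hvertG : VerticalIntegrable (mellin G) (c+1) volume := by
    have heq : (fun τ : ℝ => M τ / (((c+1:ℝ):ℂ) + (τ:ℂ) * Complex.I)) =ᶠ[ae volume]
        (fun τ : ℝ => mellin G (((c+1:ℝ):ℂ) + (τ:ℂ) * Complex.I)) := by
      refine ae_of_all _ fun τ => ?_
      show M τ / (((c+1:ℝ):ℂ) + (τ:ℂ) * Complex.I)
          = mellin G (((c+1:ℝ):ℂ) + (τ:ℂ) * Complex.I)
      rw [hmelG _ (by simp)]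
      rw [show (((c+1:ℝ):ℂ) + (τ:ℂ) * Complex.I) + 1 = (c:ℂ) + (τ:ℂ) * Complex.I + 2 from by
        push_cast; ring]
    refine Integrable.congr ?_ heq
    have hcontX : Continuous fun τ : ℝ => (((c+1:ℝ):ℂ) + (τ:ℂ) * Complex.I) := by fun_prop
    refine Integrable.mono' (hmel.norm.const_mul ((c+1)⁻¹))
      ((hmel.aestronglyMeasurable.aemeasurable.div hcontX.aemeasurable).aestronglyMeasurable)
      (ae_of_all _ fun τ => ?_)
    rw [norm_div]
    have h2 : c + 1 ≤ ‖((c+1:ℝ):ℂ) + (τ:ℂ) * Complex.I‖ := by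
      have h3 := Complex.abs_re_le_norm (((c+1:ℝ):ℂ) + (τ:ℂ) * Complex.I)
      have hre2 : ((((c+1:ℝ):ℂ) + (τ:ℂ) * Complex.I)).re = c + 1 := by simp
      rw [hre2, abs_of_pos hc1p] at h3
      exact h3
    calc ‖M τ‖ / ‖((c+1:ℝ):ℂ) + (τ:ℂ) * Complex.I‖ ≤ ‖M τ‖ / (c+1) :=
          div_le_div_of_nonneg_left (norm_nonneg _) hc1p h2
      _ = (c+1)⁻¹ * ‖M τ‖ := by ring
  have hGcont : ContinuousAt G r := by
    have h2r : 0 < r/2 := half_pos hr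
    have hprim : ContinuousAt (fun x : ℝ => ∫ t in (r/2)..x, f t) r := by
      have hii : IntervalIntegrable f volume (r/2) r := by
        rw [intervalIntegrable_iff_integrableOn_Ioc_of_le (by linarith)]
        exact (intOn_Ioi c hcm1 f hf hint h2r).mono_set Set.Ioc_subset_Ioi_self
      have hmsf : StronglyMeasurableAtFilter f (nhds r) volume :=
        ⟨Set.Ioi 0, Ioi_mem_nhds hr, hf.aestronglyMeasurable measurableSet_Ioi⟩
      exact (intervalIntegral.integral_hasDerivAt_right hii hmsf
        (hf.continuousAt (Ioi_mem_nhds hr))).continuousAt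
    have heq : ∀ x : ℝ, r/2 < x → G x = G (r/2) - ((∫ t in (r/2)..x, f t : ℝ) : ℂ) := by
      intro x hx
      have hd : Disjoint (Set.Ioc (r/2) x) (Set.Ioi x) := by
        rw [Set.disjoint_left]; intro a ha1 ha2; exact absurd ha1.2 (not_le.mpr ha2)
      have hsplit : (∫ u in Set.Ioi (r/2), f u)
          = (∫ u in Set.Ioc (r/2) x, f u) + ∫ u in Set.Ioi x, f u := by
        rw [← setIntegral_union hd measurableSet_Ioi
          ((intOn_Ioi c hcm1 f hf hint h2r).mono_set Set.Ioc_subset_Ioi_self)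
          (intOn_Ioi c hcm1 f hf hint (lt_trans h2r hx)),
          Set.Ioc_union_Ioi_eq_Ioi hx.le]
      rw [show (∫ t in (r/2)..x, f t) = ∫ u in Set.Ioc (r/2) x, f u from
        intervalIntegral.integral_of_le hx.le]
      simp only [hG]
      have e1 : (∫ u in Set.Ioi x, ((f u : ℂ))) = ((∫ u in Set.Ioi x, f u : ℝ) : ℂ) :=
        integral_ofReal
      have e2 : (∫ u in Set.Ioi (r/2), ((f u : ℂ))) = ((∫ u in Set.Ioi (r/2), f u : ℝ) : ℂ) :=
        integral_ofReal
      rw [e1, e2, ← Complex.ofReal_sub]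
      congr 1
      linarith
    have heq' : G =ᶠ[nhds r] fun x => G (r/2) - ((∫ t in (r/2)..x, f t : ℝ) : ℂ) := by
      filter_upwards [eventually_gt_nhds (show r/2 < r by linarith)] with x hx using heq x hx
    rw [continuousAt_congr heq']
    exact continuousAt_const.sub (Complex.continuous_ofReal.continuousAt.comp hprim)
  have hinv : mellinInv (c+1) (mellin G) r = G r :=
    mellinInv_mellin_eq (c+1) G hr hconvG hvertG hGcont
  have hF'req : (fun τ : ℝ => F' r τ) = fun τ : ℝ => (-Complex.I/(κ₀:ℂ)) *
      ((r:ℂ) ^ (-(((c+1:ℝ):ℂ) + (τ:ℂ) * Complex.I)) •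
        mellin G (((c+1:ℝ):ℂ) + (τ:ℂ) * Complex.I)) := by
    funext τ
    rw [smul_eq_mul, hmelG _ (by simp)]
    rw [show (((c+1:ℝ):ℂ) + (τ:ℂ) * Complex.I) = (c:ℂ) + (τ:ℂ) * Complex.I + 1 from by
      push_cast; ring]
    rw [show (c:ℂ) + (τ:ℂ) * Complex.I + 1 + 1 = (c:ℂ) + (τ:ℂ) * Complex.I + 2 from by ring]
    rw [hF']
    simp only [hM]
    rw [show -((c:ℂ) + (τ:ℂ) * Complex.I) - 1 = -((c:ℂ) + (τ:ℂ) * Complex.I + 1) from by ring]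
    field_simp [hκne, hlam1_ne τ]
  have hmidef : (2*(π:ℝ)) • mellinInv (c+1) (mellin G) r
      = ∫ τ : ℝ, (r:ℂ) ^ (-(((c+1:ℝ):ℂ) + (τ:ℂ) * Complex.I)) •
          mellin G (((c+1:ℝ):ℂ) + (τ:ℂ) * Complex.I) := by
    rw [mellinInv, smul_smul, mul_one_div, div_self (by positivity : (2*π:ℝ) ≠ 0), one_smul]
  have hintF' : (∫ τ : ℝ, F' r τ) = (-Complex.I/(κ₀:ℂ)) * ((2*(π:ℝ)) • G r) := by
    rw [hF'req, MeasureTheory.integral_const_mul, ← hmidef, hinv]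
  have hq : qOne κ₀ c f = fun x : ℝ => (1 / (2 * (π:ℂ) * Complex.I)) *
      ∫ τ : ℝ, (x:ℂ) ^ (-((c:ℂ) + (τ:ℂ) * Complex.I)) * M τ / D τ * Complex.I := rfl
  rw [hq]
  have h2 := key.const_mul (1 / (2 * (π:ℂ) * Complex.I))
  refine h2.congr_deriv ?_
  rw [hintF']
  simp only [hG]
  rw [Complex.real_smul]
  push_cast
  have hI := Complex.I_ne_zero
  field_simp

/-- let `κ₀ > 0`, `c ∈ (-1,-1/2)`, and let `f : (0,∞) → ℝ` be continuous
with `∫₀^∞ t^{c+1}|f(t)| dt < ∞` and with Mellin transform `f̃(s) = ∫₀^∞ r^{s-1}f(r) dr`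
absolutely integrable over the line `{Re λ = c}` as a function of `λ ↦ f̃(λ+2)`.  Then
`q₁(r) = (1/(2πi)) ∫_{Re λ=c} r^{-λ} f̃(λ+2)/(κ₀ λ (λ+1)) dλ` is differentiable on
`(0,∞)` with `q₁′(r) = -(1/κ₀) ∫_r^∞ f(t) dt` for every `r > 0`; in particular, if
`∫₀^∞ f(t) dt = 0` (and this integral converges), then `lim_{r→0⁺} q₁′(r) = 0`. -/
theorem stmt15 (κ₀ c : ℝ) (hκ₀ : 0 < κ₀) (hc : c ∈ Set.Ioo (-1 : ℝ) (-1/2))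
    (f : ℝ → ℝ) (hf : ContinuousOn f (Set.Ioi 0))
    (hint : IntegrableOn (fun t : ℝ => t ^ (c + 1) * |f t|) (Set.Ioi 0))
    (hmel : Integrable (fun τ : ℝ =>
      mellin (fun t => (f t : ℂ)) ((c : ℂ) + (τ : ℂ) * Complex.I + 2))) :
    (∀ r : ℝ, 0 < r →
      HasDerivAt (qOne κ₀ c f) ((-(1/κ₀) * ∫ t in Set.Ioi r, f t : ℝ) : ℂ) r) ∧
    (IntegrableOn f (Set.Ioi 0) → (∫ t in Set.Ioi (0:ℝ), f t) = 0 →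
      Tendsto (fun r => deriv (qOne κ₀ c f) r) (nhdsWithin 0 (Set.Ioi 0)) (nhds 0)) := by
  have hderiv : ∀ r : ℝ, 0 < r →
      HasDerivAt (qOne κ₀ c f) ((-(1/κ₀) * ∫ t in Set.Ioi r, f t : ℝ) : ℂ) r := by
    intro r hr
    have h := qOne_hasDerivAt κ₀ c hκ₀ hc f hf hint hmel hr
    have e1 : (∫ u in Set.Ioi r, ((f u : ℂ))) = ((∫ u in Set.Ioi r, f u : ℝ) : ℂ) :=
      integral_ofReal
    rw [e1] at h
    convert h using 1
    push_cast
    ring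
  refine ⟨hderiv, fun hfint hzero => ?_⟩
  have hev : (fun r => deriv (qOne κ₀ c f) r) =ᶠ[nhdsWithin 0 (Set.Ioi 0)]
      (fun r => ((-(1/κ₀) * ∫ t in Set.Ioi r, f t : ℝ) : ℂ)) := by
    filter_upwards [self_mem_nhdsWithin] with r hr using (hderiv r hr).deriv
  rw [tendsto_congr' hev]
  have h3 : Tendsto (fun r : ℝ => ∫ t in Set.Ioc 0 r, f t) (nhdsWithin 0 (Set.Ioi 0))
      (nhds 0) := by
    have hmeas : Tendsto (fun r : ℝ => (volume.restrict (Set.Ioi (0:ℝ))) (Set.Ioc 0 r))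
        (nhdsWithin 0 (Set.Ioi 0)) (nhds 0) := by
      have he : ∀ r : ℝ, (volume.restrict (Set.Ioi (0:ℝ))) (Set.Ioc 0 r) = ENNReal.ofReal r := by
        intro r
        rw [Measure.restrict_apply measurableSet_Ioc,
          Set.inter_eq_left.mpr Set.Ioc_subset_Ioi_self, Real.volume_Ioc, sub_zero]
      simp only [he]
      have h0 := (ENNReal.continuous_ofReal.tendsto 0).comp
        (tendsto_id.mono_left (nhdsWithin_le_nhds : nhdsWithin (0:ℝ) (Set.Ioi 0) ≤ nhds 0))
      simpa using h0
    have h4 := hfint.tendsto_setIntegral_nhds_zero (s := fun r : ℝ => Set.Ioc 0 r) hmeas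
    refine h4.congr fun r => ?_
    rw [Measure.restrict_restrict measurableSet_Ioc,
      Set.inter_eq_left.mpr Set.Ioc_subset_Ioi_self]
  have h5 : Tendsto (fun r : ℝ => ∫ t in Set.Ioi r, f t) (nhdsWithin 0 (Set.Ioi 0))
      (nhds 0) := by
    have hev2 : (fun r : ℝ => ∫ t in Set.Ioi r, f t) =ᶠ[nhdsWithin 0 (Set.Ioi 0)]
        (fun r : ℝ => - ∫ t in Set.Ioc 0 r, f t) := by
      filter_upwards [self_mem_nhdsWithin] with r hr
      have hd : Disjoint (Set.Ioc 0 r) (Set.Ioi r) := by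
        rw [Set.disjoint_left]; intro a ha1 ha2; exact absurd ha1.2 (not_le.mpr ha2)
      have hsum : (∫ t in Set.Ioi (0:ℝ), f t)
          = (∫ t in Set.Ioc 0 r, f t) + ∫ t in Set.Ioi r, f t := by
        rw [← setIntegral_union hd measurableSet_Ioi (hfint.mono_set Set.Ioc_subset_Ioi_self)
          (hfint.mono_set (Set.Ioi_subset_Ioi (le_of_lt hr))),
          Set.Ioc_union_Ioi_eq_Ioi (le_of_lt hr)]
      rw [hzero] at hsum
      linarith
    rw [tendsto_congr' hev2]
    simpa using h3.neg
  have h6 : Tendsto (fun r : ℝ => -(1/κ₀) * ∫ t in Set.Ioi r, f t) (nhdsWithin 0 (Set.Ioi 0))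
      (nhds 0) := by
    have h7 := h5.const_mul (-(1/κ₀))
    simpa using h7
  have h8 := (Complex.continuous_ofReal.tendsto 0).comp h6
  simp only [Function.comp_def] at h8
  simp only [Complex.ofReal_zero] at h8
  refine Tendsto.congr (fun r => ?_) (by simpa using h8)
  push_cast
  ring
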